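/- Let X be a compact metrizable space, let Y ⊆ X be a closed subset, and let 𝒱 be a finite open cover of the topological space Y (i.e., a finite collection of nonempty open subsets of Y whose union is Y). Then there exists a finite collection 𝒲 of nonempty open subsets of X whose union contains Y, such that ord(𝒲) ≤ ord(𝒱) and such that 𝒲 ∩ Y refines 𝒱 (as open covers of the space Y). -/
import Mathlib


open scoped Classical

/-- The order of a finite collection of subsets of `X`:
`max_x Card {U ∈ 𝒰 : x ∈ U} - 1`. -/
noncomputable def coverOrder {X : Type*} (𝒰 : Finset (Set X)) : ℕ :=
  ⨆ x : X, ((𝒰.filter fun U => x ∈ U).card - 1)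

/-- Let `X` be a compact metrizable space, `Y ⊆ X` closed, and `𝒱` a finite
open cover of the topological space `Y` (a finite collection of nonempty relatively open
subsets of `Y` whose union is `Y`).  Then there is a finite collection `𝒲` of nonempty open
subsets of `X` whose union contains `Y`, with `ord 𝒲 ≤ ord 𝒱`, and such that `𝒲 ∩ Y`
refines `𝒱`. -/
theorem stmt0 {X : Type*} [TopologicalSpace X] [CompactSpace X]
    [TopologicalSpace.MetrizableSpace X]
    (Y : Set X) (hY : IsClosed Y)
    (𝒱 : Finset (Set X))
    (h𝒱open : ∀ V ∈ 𝒱, ∃ O : Set X, IsOpen O ∧ V = O ∩ Y)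
    (h𝒱ne : ∀ V ∈ 𝒱, V.Nonempty)
    (h𝒱cover : (⋃ V ∈ 𝒱, V) = Y) :
    ∃ 𝒲 : Finset (Set X),
      (∀ W ∈ 𝒲, IsOpen W ∧ W.Nonempty) ∧
      Y ⊆ ⋃ W ∈ 𝒲, W ∧
      coverOrder 𝒲 ≤ coverOrder 𝒱 ∧
      (∀ W ∈ 𝒲, (W ∩ Y).Nonempty → ∃ V ∈ 𝒱, W ∩ Y ⊆ V) := by
  letI : MetricSpace X := TopologicalSpace.metrizableSpaceMetric X
  by_cases hYne : Y.Nonempty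
  · -- main case
    haveI : Nonempty X := ⟨hYne.choose⟩
    set g : Set X → Set X := fun V =>
      if (Y \ V).Nonempty then {x | Metric.infDist x Y < Metric.infDist x (Y \ V)}
      else Set.univ with hg
    -- each V ∈ 𝒱 is a subset of Y
    have hVsubY : ∀ V ∈ 𝒱, V ⊆ Y := by
      intro V hV
      obtain ⟨O, _, rfl⟩ := h𝒱open V hV
      exact Set.inter_subset_right
    -- g V is open
    have hgopen : ∀ V, IsOpen (g V) := by
      intro V
      by_cases h : (Y \ V).Nonempty
      · simp only [hg, if_pos h]
        exact isOpen_lt (Metric.continuous_infDist_pt Y) (Metric.continuous_infDist_pt (Y \ V))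
      · simp only [hg, if_neg h]
        exact isOpen_univ
    -- V ⊆ g V for V ∈ 𝒱
    have hsub : ∀ V ∈ 𝒱, V ⊆ g V := by
      intro V hV v hv
      by_cases hne : (Y \ V).Nonempty
      · simp only [hg, if_pos hne, Set.mem_setOf_eq]
        have hvY : v ∈ Y := hVsubY V hV hv
        have h1 : Metric.infDist v Y = 0 := Metric.infDist_zero_of_mem hvY
        have hclosed : IsClosed (Y \ V) := by
          obtain ⟨O, hO, rfl⟩ := h𝒱open V hV
          have : Y \ (O ∩ Y) = Y ∩ Oᶜ := by
            ext z
            simp only [Set.mem_diff, Set.mem_inter_iff, Set.mem_compl_iff]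
            tauto
          rw [this]
          exact hY.inter hO.isClosed_compl
        have h2 : 0 < Metric.infDist v (Y \ V) := by
          rw [← hclosed.notMem_iff_infDist_pos hne]
          simp [hv]
        rw [h1]; exact h2
      · simp only [hg, if_neg hne]; trivial
    -- key: if x ∈ g V and y is a nearest point of Y to x, then y ∈ V
    have hkey : ∀ V ∈ 𝒱, ∀ x ∈ g V, ∀ y ∈ Y,
        dist x y = Metric.infDist x Y → y ∈ V := by
      intro V hV x hx y hyY hyd
      by_cases hne : (Y \ V).Nonempty
      · simp only [hg, if_pos hne, Set.mem_setOf_eq] at hx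
        by_contra hyV
        have : Metric.infDist x (Y \ V) ≤ dist x y :=
          Metric.infDist_le_dist_of_mem ⟨hyY, hyV⟩
        rw [hyd] at this
        exact absurd hx (not_lt.mpr this)
      · rw [Set.not_nonempty_iff_eq_empty, Set.diff_eq_empty] at hne
        exact hne hyY
    refine ⟨𝒱.image g, ?_, ?_, ?_, ?_⟩
    · intro W hW
      obtain ⟨V, hV, rfl⟩ := Finset.mem_image.mp hW
      exact ⟨hgopen V, (h𝒱ne V hV).mono (hsub V hV)⟩
    · intro y hy
      have : y ∈ ⋃ V ∈ 𝒱, V := h𝒱cover ▸ hy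
      obtain ⟨V, hV, hyV⟩ := Set.mem_iUnion₂.mp this
      exact Set.mem_iUnion₂.mpr ⟨g V, Finset.mem_image_of_mem g hV, hsub V hV hyV⟩
    · -- order
      refine ciSup_le fun x => ?_
      obtain ⟨y, hyY, hyd⟩ := (hY.isCompact).exists_infDist_eq_dist hYne x
      have hcard : ((𝒱.image g).filter fun U => x ∈ U).card ≤
          (𝒱.filter fun U => y ∈ U).card := by
        have hsub2 : ((𝒱.image g).filter fun U => x ∈ U) ⊆
            (𝒱.filter fun U => y ∈ U).image g := by
          intro W hW
          rw [Finset.mem_filter] at hW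
          obtain ⟨V, hV, rfl⟩ := Finset.mem_image.mp hW.1
          refine Finset.mem_image.mpr ⟨V, Finset.mem_filter.mpr ⟨hV, ?_⟩, rfl⟩
          exact hkey V hV x hW.2 y hyY hyd.symm
        calc ((𝒱.image g).filter fun U => x ∈ U).card
            ≤ ((𝒱.filter fun U => y ∈ U).image g).card := Finset.card_le_card hsub2
          _ ≤ (𝒱.filter fun U => y ∈ U).card := Finset.card_image_le
      have h1 : ((𝒱.image g).filter fun U => x ∈ U).card - 1 ≤
          (𝒱.filter fun U => y ∈ U).card - 1 := tsub_le_tsub_right hcard 1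
      refine h1.trans ?_
      have hbdd : BddAbove (Set.range fun z : X => (𝒱.filter fun U => z ∈ U).card - 1) := by
        refine ⟨𝒱.card, ?_⟩
        rintro _ ⟨z, rfl⟩
        exact le_trans (Nat.sub_le _ _) (Finset.card_filter_le _ _)
      exact le_ciSup hbdd y
    · intro W hW _
      obtain ⟨V, hV, rfl⟩ := Finset.mem_image.mp hW
      refine ⟨V, hV, ?_⟩
      intro x hx
      obtain ⟨hxW, hxY⟩ := hx
      have : dist x x = Metric.infDist x Y := by
        rw [dist_self, Metric.infDist_zero_of_mem hxY]
      exact hkey V hV x hxW x hxY this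
  · -- Y empty
    rw [Set.not_nonempty_iff_eq_empty] at hYne
    refine ⟨∅, by simp, by simp [hYne], ?_, by simp⟩
    have h0 : (⨆ _ : X, (0:ℕ)) = 0 := by
      rcases isEmpty_or_nonempty X with h | h
      · rw [iSup_of_empty']
        exact csSup_empty
      · exact ciSup_const
    simp only [coverOrder, Finset.notMem_empty, Finset.filter_empty, Finset.card_empty,
      Nat.zero_sub, h0]
    exact Nat.zero_le _
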